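/- If (A) holds, then for each p ∈ Σ the element a_p := ⋀{a : a ∈ ξ(p)} is an atom of L, the elements a_p (p ∈ Σ) are exactly the atoms of L, and a ∈ ξ(p) iff a_p ≤ a. -/
import Mathlib


universe u v

/-- A state property system: states, a complete lattice of properties, and
the actuality map `xi` assigning to each state the set of actual properties. -/
structure SPS (σ : Type u) (L : Type v) [CompleteLattice L] where
  xi : σ → Set L
  top_mem : ∀ p, ⊤ ∈ xi p
  bot_not_mem : ∀ p, ⊥ ∉ xi p
  sInf_mem : ∀ (p : σ) (A : Set L), (∀ a ∈ A, a ∈ xi p) ↔ sInf A ∈ xi p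
  le_iff : ∀ a b : L, a ≤ b ↔ ∀ r, a ∈ xi r → b ∈ xi r

variable {σ : Type u} {L : Type v} [CompleteLattice L]

/-- λ{p,q} : the set of superpositions of the pair p, q. -/
def SPS.lamPair (S : SPS σ L) (p q : σ) : Set σ := {s | S.xi p ∩ S.xi q ⊆ S.xi s}

/-- A set is λ-closed if it contains λ{p,q} for each pair of its points. -/
def SPS.lamClosed (S : SPS σ L) (T : Set σ) : Prop :=
  ∀ p ∈ T, ∀ q ∈ T, S.lamPair p q ⊆ T

/-- λ(P) : the intersection of all λ-closed sets containing P. -/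
def SPS.lam (S : SPS σ L) (P : Set σ) : Set σ :=
  ⋂₀ {G | S.lamClosed G ∧ P ⊆ G}

/-- The set of superpositions of a set of states. -/
def SPS.bar (S : SPS σ L) (T : Set σ) : Set σ :=
  {p | (⋂ s ∈ T, S.xi s) ⊆ S.xi p}

/-- Property (A): at least two states and `xi` order-reflecting (injective). -/
def SPS.propA (S : SPS σ L) : Prop :=
  (∃ p q : σ, p ≠ q) ∧ ∀ p q : σ, S.xi p ⊆ S.xi q → p = q

/-- p is a minimal superposition of A. -/
def SPS.minSup (S : SPS σ L) (A : Set σ) (p : σ) : Prop :=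
  p ∈ S.bar A ∧ ∀ Q : Set σ, Q ⊂ A → p ∉ S.bar Q

/-- The minimal superposition principle for a given set A. -/
def SPS.MSPon (S : SPS σ L) (A : Set σ) : Prop :=
  ∀ p : σ, S.minSup A p →
    ∀ S₁ S₂ : Set σ, S₁ ⊂ A → S₂ ⊂ A → S₁ ∩ S₂ = ∅ → S₁ ∪ S₂ = A →
      (S.bar (S₁ ∪ {p}) ∩ S.bar S₂).Nonempty

/-- n-MSP : MSP for all sets of cardinality at most n. -/
def SPS.nMSP (S : SPS σ L) (n : ℕ) : Prop :=
  ∀ A : Set σ, A.Finite → A.ncard ≤ n → S.MSPon A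

/-- f-MSP : MSP for all finite sets. -/
def SPS.fMSP (S : SPS σ L) : Prop := ∀ A : Set σ, A.Finite → S.MSPon A

/-- The atom associated to a state: the smallest actual property. -/
def atomOf (S : SPS σ L) (p : σ) : L := sInf (S.xi p)

theorem stmt11 (S : SPS σ L) (hA : S.propA) :
    (∀ p : σ, IsAtom (atomOf S p)) ∧
    (∀ a : L, IsAtom a → ∃ p : σ, a = atomOf S p) ∧
    (∀ p : σ, ∀ a : L, a ∈ S.xi p ↔ atomOf S p ≤ a) := by
  have hmem : ∀ p : σ, atomOf S p ∈ S.xi p := fun p =>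
    (S.sInf_mem p (S.xi p)).mp (fun a ha => ha)
  have hiff : ∀ p : σ, ∀ a : L, a ∈ S.xi p ↔ atomOf S p ≤ a := by
    intro p a
    constructor
    · intro h; exact sInf_le h
    · intro h
      exact (S.le_iff (atomOf S p) a).mp h p (hmem p)
  have hne : ∀ p : σ, atomOf S p ≠ ⊥ := by
    intro p h
    exact S.bot_not_mem p (h ▸ hmem p)
  have hex : ∀ b : L, b ≠ ⊥ → ∃ r, b ∈ S.xi r := by
    intro b hb
    by_contra h
    push_neg at h
    apply hb
    have : b ≤ ⊥ := (S.le_iff b ⊥).mpr (fun r hr => absurd hr (h r))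
    exact le_bot_iff.mp this
  have hatom : ∀ p : σ, IsAtom (atomOf S p) := by
    intro p
    refine ⟨hne p, fun b hb => ?_⟩
    by_contra hbne
    obtain ⟨r, hr⟩ := hex b hbne
    have har : atomOf S r ≤ b := (hiff r b).mp hr
    have hsub : S.xi p ⊆ S.xi r := by
      intro a ha
      have : atomOf S r ≤ a := le_trans har (le_trans hb.le ((hiff p a).mp ha))
      exact (hiff r a).mpr this
    have hpr := hA.2 p r hsub
    subst hpr
    exact absurd (lt_of_le_of_lt har hb) (lt_irrefl _)
  refine ⟨hatom, ?_, hiff⟩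
  intro a ha
  obtain ⟨r, hr⟩ := hex a ha.1
  have h1 : atomOf S r ≤ a := (hiff r a).mp hr
  exact ⟨r, ((ha.le_iff_eq (hne r)).mp h1).symm⟩
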